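/- Let C ⊆ [0,1] be a compact nowhere dense set and for ε > 0 let H_ε(C) = {φ ∈ H⁺ : there are no x ∈ ℝ and d ≥ ε with x, x+d, x+2d ∈ φ(C)}. Then the set H_0(C) = ⋂_{k≥1} H_{1/k}(C) is residual in H⁺, and for every φ ∈ H_0(C) the image φ(C) is FAP. -/

import Mathlib

open Set Finset

noncomputable section

/-- `A ⊆ ℝ` is *FAP* (free of arithmetic progressions): it contains no 3-term AP. -/
def FAP (A : Set ℝ) : Prop :=
  ¬ ∃ x d : ℝ, 0 < d ∧ x ∈ A ∧ x + d ∈ A ∧ x + 2 * d ∈ A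

/-- `H⁺`: the strictly increasing homeomorphisms of `[0,1]` onto itself, realized as the
subset of `C([0,1], ℝ)` (carrying the sup-norm topology) consisting of the strictly
increasing continuous functions fixing `0` and `1` (such a map is automatically a
homeomorphism of `[0,1]` onto itself). -/
def Hplus : Set C(Set.Icc (0:ℝ) 1, ℝ) :=
  {f | StrictMono f ∧ f ⟨0, by norm_num⟩ = 0 ∧ f ⟨1, by norm_num⟩ = 1}

/-- The image in `ℝ` of a set `C ⊆ [0,1]` under `f : C([0,1], ℝ)`. -/
def imgC (f : C(Set.Icc (0:ℝ) 1, ℝ)) (C : Set ℝ) : Set ℝ :=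
  ⇑f '' (Subtype.val ⁻¹' C)

/-- `H_ε(C)`: the set of `φ ∈ H⁺` such that `φ(C)` has no 3-term AP of step `d ≥ ε`. -/
def Heps (C : Set ℝ) (ε : ℝ) : Set ↥Hplus :=
  {φ | ¬ ∃ x d : ℝ, ε ≤ d ∧ x ∈ imgC φ.1 C ∧ x + d ∈ imgC φ.1 C ∧ x + 2 * d ∈ imgC φ.1 C}

abbrev II := Set.Icc (0:ℝ) 1


noncomputable def pl (x y : ℕ → ℝ) (M : ℕ) (t : ℝ) : ℝ :=
  y 0 + ∑ i ∈ Finset.range M,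
    (y (i+1) - y i) / (x (i+1) - x i) * (max 0 (min t (x (i+1)) - x i))

lemma pl_continuous (x y : ℕ → ℝ) (M : ℕ) : Continuous (pl x y M) := by
  unfold pl
  refine continuous_const.add (continuous_finset_sum _ fun i _ => ?_)
  exact continuous_const.mul
    (continuous_const.max ((continuous_id.min continuous_const).sub continuous_const))

lemma pl_knot {x : ℕ → ℝ} (y : ℕ → ℝ) {M : ℕ} (hx : ∀ i, x i < x (i+1))
    {j : ℕ} (hj : j ≤ M) : pl x y M (x j) = y j := by
  have hmono : StrictMono x := strictMono_nat_of_lt_succ hx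
  unfold pl
  have h1 : ∀ i ∈ Finset.range M, i ∉ Finset.range j →
      (y (i+1) - y i) / (x (i+1) - x i) * (max 0 (min (x j) (x (i+1)) - x i)) = 0 := by
    intro i _ hi
    have hij : j ≤ i := by simpa using hi
    have hmin : min (x j) (x (i+1)) = x j := min_eq_left (hmono.monotone (by omega))
    have hle : x j ≤ x i := hmono.monotone hij
    rw [hmin, max_eq_left (by linarith), mul_zero]
  rw [← Finset.sum_subset (Finset.range_subset_range.mpr hj) h1]
  have h2 : ∀ i ∈ Finset.range j,
      (y (i+1) - y i) / (x (i+1) - x i) * (max 0 (min (x j) (x (i+1)) - x i))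
      = y (i+1) - y i := by
    intro i hi
    have hij : i + 1 ≤ j := Finset.mem_range.mp hi
    have hmin : min (x j) (x (i+1)) = x (i+1) := min_eq_right (hmono.monotone hij)
    have hmax : max 0 (x (i+1) - x i) = x (i+1) - x i := max_eq_right (by linarith [hx i])
    rw [hmin, hmax, div_mul_cancel₀]
    linarith [hx i]
  rw [Finset.sum_congr rfl h2, Finset.sum_range_sub]
  ring

lemma pl_mono {x y : ℕ → ℝ} {M : ℕ} (hx : ∀ i, x i < x (i+1))
    (hy : ∀ i, y i ≤ y (i+1)) : Monotone (pl x y M) := by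
  intro s t hst
  unfold pl
  refine add_le_add (le_refl _) (Finset.sum_le_sum fun i _ => ?_)
  have hslope : 0 ≤ (y (i+1) - y i) / (x (i+1) - x i) :=
    div_nonneg (by linarith [hy i]) (by linarith [hx i])
  refine mul_le_mul_of_nonneg_left ?_ hslope
  exact max_le_max le_rfl (by gcongr)

lemma exists_seg (x : ℕ → ℝ) (hx : ∀ i, x i < x (i+1)) {M : ℕ} {s : ℝ}
    (h0 : x 0 ≤ s) (hM : s < x M) : ∃ i < M, x i ≤ s ∧ s < x (i+1) := by
  induction M with
  | zero => exact absurd (lt_of_le_of_lt h0 hM) (lt_irrefl _)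
  | succ M ih =>
    by_cases h : s < x M
    · obtain ⟨i, hi, h1, h2⟩ := ih h
      exact ⟨i, by omega, h1, h2⟩
    · exact ⟨M, by omega, not_lt.mp h, hM⟩

lemma pl_strictMonoOn {x y : ℕ → ℝ} {M : ℕ} (hx : ∀ i, x i < x (i+1))
    (hy : ∀ i, y i < y (i+1)) : StrictMonoOn (pl x y M) (Set.Icc (x 0) (x M)) := by
  intro s hs t ht hst
  obtain ⟨i, hiM, h1, h2⟩ := exists_seg x hx hs.1 (lt_of_lt_of_le hst ht.2)
  unfold pl
  have key : ∀ k ∈ Finset.range M,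
      (y (k+1) - y k) / (x (k+1) - x k) * (max 0 (min s (x (k+1)) - x k)) ≤
      (y (k+1) - y k) / (x (k+1) - x k) * (max 0 (min t (x (k+1)) - x k)) := by
    intro k _
    have hslope : 0 ≤ (y (k+1) - y k) / (x (k+1) - x k) :=
      div_nonneg (by linarith [hy k]) (by linarith [hx k])
    refine mul_le_mul_of_nonneg_left (max_le_max le_rfl (by gcongr)) hslope
  have hstrict : (y (i+1) - y i) / (x (i+1) - x i) * (max 0 (min s (x (i+1)) - x i)) <
      (y (i+1) - y i) / (x (i+1) - x i) * (max 0 (min t (x (i+1)) - x i)) := by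
    have hslope : 0 < (y (i+1) - y i) / (x (i+1) - x i) :=
      div_pos (by linarith [hy i]) (by linarith [hx i])
    have hmins : min s (x (i+1)) = s := min_eq_left h2.le
    have hmint : s < min t (x (i+1)) := lt_min hst h2
    refine mul_lt_mul_of_pos_left ?_ hslope
    rw [hmins, max_eq_right (by linarith)]
    have : 0 ≤ s - x i := by linarith
    calc s - x i < min t (x (i+1)) - x i := by linarith
    _ ≤ max 0 (min t (x (i+1)) - x i) := le_max_right _ _
  have := Finset.sum_lt_sum key ⟨i, Finset.mem_range.mpr hiM, hstrict⟩
  linarith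


/-- forbidden values generated by a finite set -/
noncomputable def badSet (V : Finset ℝ) : Finset ℝ :=
  (V ×ˢ V).image (fun p => 2*p.1 - p.2) ∪ (V ×ˢ V).image (fun p => (p.1 + p.2)/2)

noncomputable def nextPt (u v : ℝ) (V : Finset ℝ) : ℝ :=
  if h : u < v then
    (((Set.Ioo_infinite h).diff (badSet V).finite_toSet).nonempty).some
  else 0

lemma nextPt_spec {u v : ℝ} (h : u < v) (V : Finset ℝ) :
    nextPt u v V ∈ Set.Ioo u v \ (badSet V : Set ℝ) := by
  rw [nextPt, dif_pos h]
  exact Set.Nonempty.some_mem _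

noncomputable def picks (s : ℕ → ℝ) : ℕ → ℝ
  | j => nextPt (s j) (s (j+1))
      (insert 0 (insert 1 ((Finset.range j).attach.image fun i => picks s i.1)))
  termination_by j => j
  decreasing_by exact Finset.mem_range.mp i.2

lemma picks_mem {s : ℕ → ℝ} (hs : ∀ i, s i < s (i+1)) (j : ℕ) :
    picks s j ∈ Set.Ioo (s j) (s (j+1)) :=
  ((by rw [picks]) : picks s j = nextPt _ _ _) ▸ (nextPt_spec (hs j) _).1

lemma picks_avoid {s : ℕ → ℝ} (hs : ∀ i, s i < s (i+1)) (j : ℕ) {b c : ℝ}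
    (hb : b = 0 ∨ b = 1 ∨ ∃ i < j, b = picks s i)
    (hc : c = 0 ∨ c = 1 ∨ ∃ i < j, c = picks s i) :
    picks s j ≠ 2*b - c ∧ picks s j ≠ (b + c)/2 := by
  have hV : ∀ {z : ℝ}, (z = 0 ∨ z = 1 ∨ ∃ i < j, z = picks s i) →
      z ∈ insert (0:ℝ) (insert 1 ((Finset.range j).attach.image fun i => picks s i.1)) := by
    rintro z (rfl | rfl | ⟨i, hi, rfl⟩)
    · exact Finset.mem_insert_self _ _
    · exact Finset.mem_insert.mpr (Or.inr (Finset.mem_insert_self _ _))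
    · refine Finset.mem_insert.mpr (Or.inr (Finset.mem_insert.mpr (Or.inr ?_)))
      exact Finset.mem_image.mpr ⟨⟨i, Finset.mem_range.mpr hi⟩, Finset.mem_attach _ _, rfl⟩
  have hspec := nextPt_spec (hs j)
      (insert 0 (insert 1 ((Finset.range j).attach.image fun i => picks s i.1)))
  have hnb := hspec.2
  rw [← picks] at hnb
  constructor
  · intro heq
    exact hnb (by
      simp only [badSet, Finset.coe_union, Set.mem_union, Finset.coe_image]
      exact Or.inl ⟨(b, c), Finset.mem_coe.mpr (Finset.mem_product.mpr ⟨hV hb, hV hc⟩), heq.symm⟩)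
  · intro heq
    exact hnb (by
      simp only [badSet, Finset.coe_union, Set.mem_union, Finset.coe_image]
      exact Or.inr ⟨(b, c), Finset.mem_coe.mpr (Finset.mem_product.mpr ⟨hV hb, hV hc⟩), heq.symm⟩)

noncomputable def piF (s : ℕ → ℝ) (N : ℕ) (j : ℕ) : ℝ :=
  if j = 0 then 0 else if j = N - 1 then 1 else picks s j

section generic
variable {N : ℕ} {s : ℕ → ℝ}

lemma piF_generic (hN : 2 ≤ N) (hs : ∀ i, s i < s (i+1))
    (h0 : s 0 = 0) (h1 : s N = 1) :
    ∀ i, i < N → ∀ j, j < N → ∀ k, k < N → i ≠ j → j ≠ k → i ≠ k →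
      piF s N i + piF s N k ≠ 2 * piF s N j := by
  have smono : StrictMono s := strictMono_nat_of_lt_succ hs
  -- basic facts about middle picks
  have hmid : ∀ m, m < N → m ≠ 0 → m ≠ N - 1 →
      0 < picks s m ∧ picks s m < 1 := by
    intro m hm hm0 hmN
    have pm := picks_mem hs m
    have hs0 : s 0 < s m := smono (by omega)
    have hup : s (m+1) ≤ s N := smono.monotone (by omega)
    have hupN : s (m+1) < s N := smono (by omega)
    constructor
    · have : (0:ℝ) < s m := by rw [← h0]; exact hs0
      linarith [pm.1]
    · have : s (m+1) < 1 := by rw [← h1]; exact hupN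
      linarith [pm.2]
  have hmidval : ∀ m, m ≠ 0 → m ≠ N - 1 → piF s N m = picks s m := by
    intro m hm0 hmN; simp [piF, hm0, hmN]
  have nn : ∀ m, m < N → 0 ≤ piF s N m := by
    intro m hm
    by_cases h0' : m = 0
    · simp [piF, h0']
    by_cases hN' : m = N - 1
    · simp [piF, hN', show N - 1 ≠ 0 by omega]
    · rw [hmidval m h0' hN']; exact (hmid m hm h0' hN').1.le
  have le1 : ∀ m, m < N → piF s N m ≤ 1 := by
    intro m hm
    by_cases h0' : m = 0
    · simp [piF, h0']
    by_cases hN' : m = N - 1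
    · simp [piF, hN', show N - 1 ≠ 0 by omega]
    · rw [hmidval m h0' hN']; exact (hmid m hm h0' hN').2.le
  have pos : ∀ m, m < N → m ≠ 0 → 0 < piF s N m := by
    intro m hm h0'
    by_cases hN' : m = N - 1
    · simp [piF, hN', show N - 1 ≠ 0 by omega]
    · rw [hmidval m h0' hN']; exact (hmid m hm h0' hN').1
  have lt1 : ∀ m, m < N → m ≠ N - 1 → piF s N m < 1 := by
    intro m hm hN'
    by_cases h0' : m = 0
    · simp [piF, h0']
    · rw [hmidval m h0' hN']; exact (hmid m hm h0' hN').2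
  intro i hi j hj k hk hij hjk hik heq
  by_cases hj0 : j = 0
  · have hπj : piF s N j = 0 := by simp [piF, hj0]
    have := pos i hi (by omega)
    have := nn k hk
    rw [hπj] at heq; linarith
  by_cases hjN : j = N - 1
  · have hπj : piF s N j = 1 := by simp [piF, hjN, show N - 1 ≠ 0 by omega]
    have := lt1 i hi (by omega)
    have := le1 k hk
    rw [hπj] at heq; linarith
  -- j is middle
  rw [hmidval j hj0 hjN] at heq
  have key : ∀ m, m < N → m ≠ 0 → m ≠ N - 1 → m ≠ j → ∀ e : ℝ,
      (e = 0 ∨ e = 1) → e + picks s m ≠ 2 * picks s j := by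
    intro m hm hm0 hmN hmj e he hEq
    have he' : e = 0 ∨ e = 1 ∨ ∃ i < max m j, e = picks s i := by tauto
    rcases lt_or_gt_of_ne hmj with h | h
    · -- m < j : picks j = (e + picks m)/2 forbidden
      have hav := picks_avoid hs j (b := e) (c := picks s m)
        (by tauto) (Or.inr (Or.inr ⟨m, h, rfl⟩))
      exact hav.2 (by linarith)
    · -- j < m : picks m = 2 * picks j - e forbidden
      have hav := picks_avoid hs m (b := picks s j) (c := e)
        (Or.inr (Or.inr ⟨j, h, rfl⟩)) (by tauto)
      exact hav.1 (by linarith)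
  by_cases hi0 : i = 0
  · have hπi : piF s N i = 0 := by simp [piF, hi0]
    by_cases hkN : k = N - 1
    · -- 0 + 1 = 2 picks j
      have hπk : piF s N k = 1 := by simp [piF, hkN, show N - 1 ≠ 0 by omega]
      have hav := picks_avoid hs j (b := (0:ℝ)) (c := (1:ℝ)) (Or.inl rfl) (Or.inr (Or.inl rfl))
      rw [hπi, hπk] at heq
      exact hav.2 (by linarith)
    · have hk0 : k ≠ 0 := by omega
      rw [hπi, hmidval k hk0 hkN] at heq
      exact key k hk hk0 hkN (by omega) 0 (Or.inl rfl) (by linarith)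
  by_cases hiN : i = N - 1
  · have hπi : piF s N i = 1 := by simp [piF, hiN, show N - 1 ≠ 0 by omega]
    by_cases hk0 : k = 0
    · have hπk : piF s N k = 0 := by simp [piF, hk0]
      have hav := picks_avoid hs j (b := (0:ℝ)) (c := (1:ℝ)) (Or.inl rfl) (Or.inr (Or.inl rfl))
      rw [hπi, hπk] at heq
      exact hav.2 (by linarith)
    · have hkN : k ≠ N - 1 := by omega
      rw [hπi, hmidval k hk0 hkN] at heq
      exact key k hk hk0 hkN (by omega) 1 (Or.inr rfl) (by linarith)
  -- i middle
  rw [hmidval i hi0 hiN] at heq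
  by_cases hk0 : k = 0
  · have hπk : piF s N k = 0 := by simp [piF, hk0]
    rw [hπk] at heq
    exact key i hi hi0 hiN hij 0 (Or.inl rfl) (by linarith)
  by_cases hkN : k = N - 1
  · have hπk : piF s N k = 1 := by simp [piF, hkN, show N - 1 ≠ 0 by omega]
    rw [hπk] at heq
    exact key i hi hi0 hiN hij 1 (Or.inr rfl) (by linarith)
  -- all middle
  rw [hmidval k hk0 hkN] at heq
  have htri : (i < j ∧ k < j) ∨ (j < i ∧ k < i) ∨ (i < k ∧ j < k) := by omega
  rcases htri with ⟨h1', h2'⟩ | ⟨h1', h2'⟩ | ⟨h1', h2'⟩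
  · have hav := picks_avoid hs j (b := picks s i) (c := picks s k)
      (Or.inr (Or.inr ⟨i, h1', rfl⟩)) (Or.inr (Or.inr ⟨k, h2', rfl⟩))
    exact hav.2 (by linarith)
  · have hav := picks_avoid hs i (b := picks s j) (c := picks s k)
      (Or.inr (Or.inr ⟨j, h1', rfl⟩)) (Or.inr (Or.inr ⟨k, h2', rfl⟩))
    exact hav.1 (by linarith)
  · have hav := picks_avoid hs k (b := picks s j) (c := picks s i)
      (Or.inr (Or.inr ⟨j, h2', rfl⟩)) (Or.inr (Or.inr ⟨i, h1', rfl⟩))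
    exact hav.1 (by linarith)

end generic

lemma Heps_isOpen {C : Set ℝ} (hcl : IsClosed C) (ε : ℝ) : IsOpen (Heps C ε) := by
  have hC' : IsClosed (Subtype.val ⁻¹' C : Set II) := hcl.preimage continuous_subtype_val
  set S : Set (↥Hplus × (II × II × II)) :=
    {p | p.2.1 ∈ Subtype.val ⁻¹' C ∧ p.2.2.1 ∈ Subtype.val ⁻¹' C ∧
      p.2.2.2 ∈ Subtype.val ⁻¹' C ∧
      ε ≤ p.1.1 p.2.2.1 - p.1.1 p.2.1 ∧
      p.1.1 p.2.1 + p.1.1 p.2.2.2 = 2 * p.1.1 p.2.2.1} with hS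
  have he : ∀ (g : ↥Hplus × (II × II × II) → II), Continuous g →
      Continuous (fun p : ↥Hplus × (II × II × II) => p.1.1 (g p)) := by
    intro g hg
    exact ContinuousEval.continuous_eval.comp
      ((continuous_subtype_val.comp continuous_fst).prodMk hg)
  have hc1 : Continuous (fun p : ↥Hplus × (II × II × II) => p.1.1 p.2.1) :=
    he _ (continuous_fst.comp continuous_snd)
  have hc2 : Continuous (fun p : ↥Hplus × (II × II × II) => p.1.1 p.2.2.1) :=
    he _ ((continuous_fst.comp continuous_snd).comp continuous_snd)
  have hc3 : Continuous (fun p : ↥Hplus × (II × II × II) => p.1.1 p.2.2.2) :=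
    he _ ((continuous_snd.comp continuous_snd).comp continuous_snd)
  have hSclosed : IsClosed S := by
    rw [hS]
    refine IsClosed.inter ?_ (IsClosed.inter ?_ (IsClosed.inter ?_ (IsClosed.inter ?_ ?_)))
    · exact hC'.preimage (continuous_fst.comp continuous_snd)
    · exact hC'.preimage ((continuous_fst.comp continuous_snd).comp continuous_snd)
    · exact hC'.preimage ((continuous_snd.comp continuous_snd).comp continuous_snd)
    · exact isClosed_le continuous_const (hc2.sub hc1)
    · exact isClosed_eq (hc1.add hc3) (continuous_const.mul hc2)
  have himg : (Heps C ε)ᶜ = Prod.fst '' S := by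
    ext φ
    simp only [Heps, Set.mem_compl_iff, Set.mem_setOf_eq, not_not, Set.mem_image]
    constructor
    · rintro ⟨x, d, hd, ⟨c1, hc1', hx1⟩, ⟨c2, hc2', hx2⟩, ⟨c3, hc3', hx3⟩⟩
      refine ⟨(φ, c1, c2, c3), ⟨hc1', hc2', hc3', ?_, ?_⟩, rfl⟩
      · rw [hx1, hx2]; linarith
      · rw [hx1, hx2, hx3]; ring
    · rintro ⟨⟨ψ, c1, c2, c3⟩, ⟨m1, m2, m3, hge, heq⟩, rfl⟩
      refine ⟨ψ.1 c1, ψ.1 c2 - ψ.1 c1, hge, ⟨c1, m1, rfl⟩, ⟨c2, m2, by ring⟩,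
        ⟨c3, m3, by linarith⟩⟩
  rw [← isClosed_compl_iff, himg]
  exact isClosedMap_fst_of_compactSpace S hSclosed

set_option maxHeartbeats 2000000 in
lemma Heps_dense {C : Set ℝ} (hC : C ⊆ Set.Icc 0 1) (hcomp : IsCompact C)
    (hnd : IsNowhereDense C) {ε : ℝ} (hε : 0 < ε) : Dense (Heps C ε) := by
  rw [Metric.dense_iff]
  intro φ δ hδ
  obtain ⟨φmono, φ0, φ1⟩ := φ.2
  set D := imgC φ.1 C with hDdef
  have hφmem : ∀ c : II, φ.1 c ∈ Set.Icc (0:ℝ) 1 := by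
    intro c
    constructor
    · have h := φmono.monotone (show (⟨0, by norm_num⟩:II) ≤ c from Subtype.coe_le_coe.mp c.2.1)
      rw [φ0] at h; exact h
    · have h := φmono.monotone (show c ≤ (⟨1, by norm_num⟩:II) from Subtype.coe_le_coe.mp c.2.2)
      rw [φ1] at h; exact h
  have hDsub : D ⊆ Set.Icc 0 1 := by rintro _ ⟨c, _, rfl⟩; exact hφmem c
  have hC'cl : IsClosed (Subtype.val ⁻¹' C : Set II) :=
    hcomp.isClosed.preimage continuous_subtype_val
  have hDclosed : IsClosed D := (hC'cl.isCompact.image φ.1.continuous).isClosed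
  -- D has empty interior
  have hDint : interior D = ∅ := by
    by_contra h
    obtain ⟨w, hw⟩ := Set.nonempty_iff_ne_empty.mpr h
    rw [mem_interior_iff_mem_nhds, Metric.mem_nhds_iff] at hw
    obtain ⟨r, hr, hball⟩ := hw
    have hball' : ∀ z : ℝ, |z - w| < r → z ∈ D := by
      intro z hz
      exact hball (by rwa [Metric.mem_ball, Real.dist_eq])
    have hw01 : w ∈ Set.Icc (0:ℝ) 1 := hDsub (hball' w (by simpa using hr))
    have hwr0 : 0 ≤ w - r := by
      by_contra hneg
      push_neg at hneg
      have : (w - r)/2 ∈ D := hball' _ (by rw [abs_sub_lt_iff]; constructor <;> linarith [hw01.1])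
      have := (hDsub this).1
      linarith
    have hwr1 : w + r ≤ 1 := by
      by_contra hpos
      push_neg at hpos
      have : (w + r + 1)/2 ∈ D := hball' _ (by rw [abs_sub_lt_iff]; constructor <;> linarith [hw01.2])
      have := (hDsub this).2
      linarith
    have hw0 : 0 < w := by linarith
    have hw1 : w < 1 := by linarith
    obtain ⟨c, hcC, hcw⟩ := hball' w (by simpa using hr)
    have hc0 : 0 < (c : ℝ) := by
      rcases eq_or_lt_of_le c.2.1 with h' | h'
      · exfalso
        have hce : c = ⟨0, by norm_num⟩ := Subtype.ext h'.symm
        rw [hce, φ0] at hcw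
        linarith
      · exact h'
    have hc1 : (c : ℝ) < 1 := by
      rcases eq_or_lt_of_le c.2.2 with h' | h'
      · exfalso
        have hce : c = ⟨1, by norm_num⟩ := Subtype.ext h'
        rw [hce, φ1] at hcw
        linarith
      · exact h'
    obtain ⟨ρ, hρ, hρs⟩ := Metric.continuousAt_iff.mp (φ.1.continuous.continuousAt (x := c)) r hr
    set m := min ρ (min (c:ℝ) (1 - c)) with hm
    have hmpos : 0 < m := by
      apply lt_min hρ
      exact lt_min hc0 (by linarith)
    have hsubC : Metric.ball (c:ℝ) m ⊆ C := by
      intro t ht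
      rw [Metric.mem_ball, Real.dist_eq] at ht
      have htρ : |t - (c:ℝ)| < ρ := lt_of_lt_of_le ht (min_le_left _ _)
      have htc : |t - (c:ℝ)| < min (c:ℝ) (1 - c) := lt_of_lt_of_le ht (min_le_right _ _)
      have ht0 : 0 ≤ t := by
        linarith [(abs_lt.mp (lt_min_iff.mp htc).1).1]
      have ht1 : t ≤ 1 := by
        linarith [(abs_lt.mp (lt_min_iff.mp htc).2).2]
      set tt : II := ⟨t, ht0, ht1⟩ with htt
      have hdtt : dist tt c < ρ := by
        rw [Subtype.dist_eq, Real.dist_eq]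
        exact htρ
      have hφtt : φ.1 tt ∈ D := by
        apply hball'
        have := hρs hdtt
        rw [Real.dist_eq, hcw] at this
        exact this
      obtain ⟨c', hc', hcc'⟩ := hφtt
      have : c' = tt := φmono.injective hcc'
      rw [this] at hc'
      exact hc'
    have : (c:ℝ) ∈ interior C := by
      rw [mem_interior_iff_mem_nhds]
      exact Filter.mem_of_superset (Metric.ball_mem_nhds _ hmpos) hsubC
    have h2 : (c:ℝ) ∈ interior (closure C) := interior_mono subset_closure this
    rw [hnd] at h2
    exact h2
  -- stage A
  obtain ⟨N0, hN0⟩ := exists_nat_gt (2/δ)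
  set N := N0 + 2 with hNdef
  have hN2 : 2 ≤ N := by omega
  have hNpos : (0:ℝ) < N := by positivity
  have hNδ : 2/(N:ℝ) < δ := by
    rw [div_lt_iff₀ hNpos]
    have h2 : 2/δ < (N:ℝ) := lt_of_lt_of_le hN0 (by exact_mod_cast Nat.le_add_right N0 2)
    rw [div_lt_iff₀ hδ] at h2
    linarith
  have hch : ∀ j : ℕ, 1 ≤ j → j < N → ∃ t, t ∈ Set.Ioo ((j:ℝ)/N) (((j:ℝ)+1)/N) \ D := by
    intro j h1 h2
    have hlt : (j:ℝ)/N < ((j:ℝ)+1)/N := by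
      apply div_lt_div_of_pos_right ?_ hNpos
      linarith
    by_contra hcon
    push_neg at hcon
    have hsub : Set.Ioo ((j:ℝ)/N) (((j:ℝ)+1)/N) ⊆ D := by
      intro t ht
      by_contra htD
      exact hcon t ⟨ht, htD⟩
    have hsub2 : Set.Ioo ((j:ℝ)/N) (((j:ℝ)+1)/N) ⊆ interior D :=
      (isOpen_Ioo.subset_interior_iff).mpr hsub
    rw [hDint] at hsub2
    obtain ⟨t, ht⟩ := Set.nonempty_Ioo.mpr hlt
    exact hsub2 ht
  set sfun : ℕ → ℝ := fun j => if h : 1 ≤ j ∧ j < N then (hch j h.1 h.2).choose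
    else if j = 0 then 0 else 1 + ((j:ℝ) - N) with hsfun
  have hs0 : sfun 0 = 0 := by rw [hsfun]; norm_num
  have hsN : sfun N = 1 := by
    rw [hsfun]
    have h1 : ¬(1 ≤ N ∧ N < N) := by omega
    have h2 : N ≠ 0 := by omega
    simp [h1, h2]
  have hsmem : ∀ j, 1 ≤ j → j < N →
      sfun j ∈ Set.Ioo ((j:ℝ)/N) (((j:ℝ)+1)/N) ∧ sfun j ∉ D := by
    intro j h1 h2
    have he : sfun j = (hch j h1 h2).choose := by simp only [hsfun]; rw [dif_pos ⟨h1, h2⟩]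
    rw [he]
    exact ⟨(hch j h1 h2).choose_spec.1, (hch j h1 h2).choose_spec.2⟩
  have hslt : ∀ i, sfun i < sfun (i+1) := by
    intro i
    by_cases hi0 : i = 0
    · subst hi0
      rw [hs0]
      have h1N : 1 < N := by omega
      have := (hsmem 1 le_rfl h1N).1.1
      have hp : (0:ℝ) < (1:ℝ)/N := by positivity
      simp only [Nat.cast_one] at this
      linarith
    by_cases hiN : i + 1 < N
    · have m1 := (hsmem i (by omega) (by omega)).1
      have m2 := (hsmem (i+1) (by omega) hiN).1
      have hcast : ((i:ℝ)+1)/N = (((i+1:ℕ)):ℝ)/N := by push_cast; ring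
      calc sfun i < ((i:ℝ)+1)/N := m1.2
        _ = (((i+1:ℕ)):ℝ)/N := hcast
        _ < sfun (i+1) := m2.1
    by_cases hiN' : i + 1 = N
    · have m1 := (hsmem i (by omega) (by omega)).1
      have hEq : sfun (i+1) = 1 := by rw [hiN', hsN]
      rw [hEq]
      have hc : ((i:ℝ)+1) = (N:ℝ) := by exact_mod_cast hiN'
      have : ((i:ℝ)+1)/N = 1 := by rw [hc]; field_simp
      linarith [m1.2]
    · have e1 : sfun i = 1 + ((i:ℝ) - N) := by
        rw [hsfun]
        have ha : ¬(1 ≤ i ∧ i < N) := by omega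
        have hb : i ≠ 0 := by omega
        simp [ha, hb]
      have e2 : sfun (i+1) = 1 + (((i+1:ℕ):ℝ) - N) := by
        rw [hsfun]
        have ha : ¬(1 ≤ i+1 ∧ i+1 < N) := by omega
        have hb : i+1 ≠ 0 := by omega
        have hc2 : ¬(i + 1 < N) := by omega
        simp [ha, hb, hc2]
      rw [e1, e2]
      push_cast
      linarith
  have hsmono : StrictMono sfun := strictMono_nat_of_lt_succ hslt
  have hsIoo : ∀ j, j ≤ N → (j:ℝ)/N ≤ sfun j ∧ sfun j ≤ ((j:ℝ)+1)/N := by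
    intro j hj
    by_cases hj0 : j = 0
    · subst hj0
      rw [hs0]
      constructor
      · simp
      · positivity
    by_cases hjN : j = N
    · subst hjN
      rw [hsN]
      constructor
      · rw [div_le_one hNpos]
      · rw [le_div_iff₀ hNpos]; linarith
    · have := (hsmem j (by omega) (by omega)).1
      exact ⟨this.1.le, this.2.le⟩
  have hgap : ∀ j, j < N → sfun (j+1) - sfun j ≤ 2/N := by
    intro j hj
    have h1 := (hsIoo j (by omega)).1
    have h2 := (hsIoo (j+1) (by omega)).2
    have hc : (((j+1:ℕ)):ℝ) = (j:ℝ) + 1 := by push_cast; ring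
    rw [hc] at h2
    have : ((j:ℝ)+1+1)/N - (j:ℝ)/N = 2/N := by field_simp; ring
    linarith
  -- gamma
  have hball2 : ∀ j : ℕ, ∃ r : ℝ, 0 < r ∧ (1 ≤ j → j < N → ∀ t ∈ D, r ≤ |t - sfun j|) := by
    intro j
    by_cases hj : 1 ≤ j ∧ j < N
    · have hnot := (hsmem j hj.1 hj.2).2
      have hmem : Dᶜ ∈ nhds (sfun j) := hDclosed.isOpen_compl.mem_nhds hnot
      rw [Metric.mem_nhds_iff] at hmem
      obtain ⟨r, hr, hsub⟩ := hmem
      refine ⟨r, hr, fun _ _ t ht => ?_⟩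
      by_contra hlt
      push_neg at hlt
      exact (hsub (by rwa [Metric.mem_ball, Real.dist_eq])) ht
    · exact ⟨1, one_pos, fun h1 h2 => absurd ⟨h1, h2⟩ hj⟩
  choose R hRpos hRspec using hball2
  set Γ : Finset ℝ := ((Finset.range (N+1)).image R) ∪
    ((Finset.range N).image (fun j => (sfun (j+1) - sfun j)/2)) with hΓ
  have hΓne : Γ.Nonempty := by
    refine ⟨R 0, ?_⟩
    rw [hΓ]
    exact Finset.mem_union_left _ (Finset.mem_image_of_mem R (Finset.mem_range.mpr (by omega)))
  have hΓpos : ∀ z ∈ Γ, 0 < z := by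
    intro z hz
    rw [hΓ, Finset.mem_union] at hz
    rcases hz with hz | hz
    · obtain ⟨j, _, rfl⟩ := Finset.mem_image.mp hz
      exact hRpos j
    · obtain ⟨j, _, rfl⟩ := Finset.mem_image.mp hz
      have := hslt j
      linarith
  set γ := Γ.min' hΓne / 2 with hγ
  have hγpos : 0 < γ := by
    have := hΓpos _ (Γ.min'_mem hΓne)
    rw [hγ]; linarith
  have hγlt : ∀ z ∈ Γ, γ < z := by
    intro z hz
    have h1 := Finset.min'_le Γ z hz
    have h2 := hΓpos _ (Γ.min'_mem hΓne)
    rw [hγ]; linarith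
  have hγgap : ∀ j, j < N → γ < (sfun (j+1) - sfun j)/2 := fun j hj =>
    hγlt _ (by
      rw [hΓ]
      exact Finset.mem_union_right _ (Finset.mem_image_of_mem _ (Finset.mem_range.mpr hj)))
  have hγD : ∀ t ∈ D, ∀ j, 1 ≤ j → j < N → γ < |t - sfun j| := by
    intro t ht j h1 h2
    refine lt_of_lt_of_le (hγlt (R j) ?_) (hRspec j h1 h2 t ht)
    rw [hΓ]
    exact Finset.mem_union_left _ (Finset.mem_image_of_mem R (Finset.mem_range.mpr (by omega)))
  -- stage B : eta
  set π := piF sfun N with hπdef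
  have hgen := piF_generic hN2 hslt hs0 hsN
  set wfun : ℕ → ℝ := fun j => if j = 0 then sfun 1 else if j = N-1 then 1 - sfun (N-1)
    else sfun (j+1) - picks sfun j with hwfun
  set Bfin : Finset ℝ := (((Finset.range N ×ˢ Finset.range N) ×ˢ Finset.range N).filter
      (fun t => t.1.1 ≠ t.1.2 ∧ t.1.2 ≠ t.2 ∧ t.1.1 ≠ t.2)).image
      (fun t => |π t.1.1 + π t.2 - 2 * π t.1.2|) with hBdef
  set Efin : Finset ℝ := insert (ε/2) (((Finset.range N).image wfun) ∪ Bfin) with hEdef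
  have hEne : Efin.Nonempty := ⟨ε/2, Finset.mem_insert_self _ _⟩
  have hEpos : ∀ z ∈ Efin, 0 < z := by
    intro z hz
    rw [hEdef, Finset.mem_insert] at hz
    rcases hz with rfl | hz
    · linarith
    rw [Finset.mem_union] at hz
    rcases hz with hz | hz
    · obtain ⟨j, hjm, rfl⟩ := Finset.mem_image.mp hz
      simp only [hwfun]
      by_cases hj0 : j = 0
      · have h01 := hslt 0
        rw [hs0] at h01
        simpa [hj0] using h01
      by_cases hjN : j = N-1
      · have hlast := hsmono (show N-1 < N by omega)
        rw [hsN] at hlast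
        rw [if_neg hj0, if_pos hjN]
        linarith
      · rw [if_neg hj0, if_neg hjN]
        linarith [(picks_mem hslt j).2]
    · obtain ⟨⟨⟨i, j⟩, k⟩, hmem, rfl⟩ := Finset.mem_image.mp hz
      rw [Finset.mem_filter] at hmem
      obtain ⟨hmm, hij, hjk, hik⟩ := hmem
      simp only [Finset.mem_product, Finset.mem_range] at hmm
      rw [abs_pos]
      intro hzero
      exact hgen i hmm.1.1 j hmm.1.2 k hmm.2 hij hjk hik (by linarith)
  set η := Efin.min' hEne / 5 with hηdef
  have hminpos : 0 < Efin.min' hEne := hEpos _ (Finset.min'_mem _ _)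
  have hηpos : 0 < η := by rw [hηdef]; linarith
  have hηlt : ∀ z ∈ Efin, 4*η < z := by
    intro z hz
    have := Finset.min'_le Efin z hz
    rw [hηdef]; linarith
  have hηε : 2*η < ε := by
    have := hηlt _ (Finset.mem_insert_self (ε/2) _)
    linarith [hηpos]
  have hηw : ∀ j, j < N → η < wfun j := by
    intro j hj
    have hmem : wfun j ∈ Efin := by
      rw [hEdef]
      exact Finset.mem_insert_of_mem (Finset.mem_union_left _
        (Finset.mem_image_of_mem wfun (Finset.mem_range.mpr hj)))
    have := hηlt _ hmem
    linarith [hηpos]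
  have hηB : ∀ i j k, i < N → j < N → k < N → i ≠ j → j ≠ k → i ≠ k →
      4*η < |π i + π k - 2*π j| := by
    intro i j k hi hj hk hij hjk hik
    apply hηlt
    rw [hEdef]
    apply Finset.mem_insert_of_mem
    apply Finset.mem_union_right
    rw [hBdef]
    apply Finset.mem_image.mpr
    refine ⟨((i,j),k), Finset.mem_filter.mpr ⟨?_, hij, hjk, hik⟩, rfl⟩
    simp only [Finset.mem_product, Finset.mem_range]
    exact ⟨⟨hi, hj⟩, hk⟩
  -- useful wfun unfoldings
  have hw0 : η < sfun 1 := by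
    have := hηw 0 (by omega)
    simp only [hwfun] at this
    simpa using this
  have hwN : η < 1 - sfun (N-1) := by
    have := hηw (N-1) (by omega)
    simp only [hwfun] at this
    have hne : N - 1 ≠ 0 := by omega
    rw [if_neg hne] at this
    simpa using this
  have hwmid : ∀ j, j < N → j ≠ 0 → j ≠ N-1 → η < sfun (j+1) - picks sfun j := by
    intro j hj h0' hN'
    have := hηw j hj
    simp only [hwfun] at this
    rwa [if_neg h0', if_neg hN'] at this
  -- stage C : knots
  set bfun : ℕ → ℝ := fun j => if j = 0 then η/4 else if j = N-1 then 1 - 3*η/4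
    else picks sfun j with hbfun
  have hblow : ∀ j, j < N → sfun j < bfun j := by
    intro j hj
    simp only [hbfun]
    by_cases hj0 : j = 0
    · rw [if_pos hj0, hj0, hs0]; linarith
    by_cases hjN : j = N-1
    · rw [if_neg hj0, if_pos hjN, hjN]
      linarith [hwN, hηpos]
    · rw [if_neg hj0, if_neg hjN]
      exact (picks_mem hslt j).1
  have hbhigh : ∀ j, j < N → bfun j + η/2 < sfun (j+1) := by
    intro j hj
    simp only [hbfun]
    by_cases hj0 : j = 0
    · rw [if_pos hj0, hj0]
      linarith [hw0, hηpos]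
    by_cases hjN : j = N-1
    · rw [if_neg hj0, if_pos hjN, hjN]
      have : N - 1 + 1 = N := by omega
      rw [this, hsN]
      linarith [hηpos]
    · rw [if_neg hj0, if_neg hjN]
      linarith [hwmid j hj hj0 hjN, hηpos]
  set x : ℕ → ℝ := fun i => if i < 3*N then
      (if i % 3 = 0 then sfun (i/3) else if i % 3 = 1 then sfun (i/3) + γ else sfun (i/3 + 1) - γ)
    else 1 + ((i:ℝ) - ((3*N : ℕ):ℝ)) with hxdef
  set y : ℕ → ℝ := fun i => if i < 3*N then
      (if i % 3 = 0 then sfun (i/3) else if i % 3 = 1 then bfun (i/3) else bfun (i/3) + η/2)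
    else 1 + ((i:ℝ) - ((3*N : ℕ):ℝ)) with hydef
  have hx3 : ∀ j, j ≤ N → x (3*j) = sfun j := by
    intro j hj
    simp only [hxdef]
    by_cases h : j < N
    · have h1 : 3*j < 3*N := by omega
      have h2 : (3*j) % 3 = 0 := by omega
      have h3 : (3*j)/3 = j := by omega
      rw [if_pos h1, if_pos h2, h3]
    · have hjN : j = N := by omega
      have h1 : ¬(3*j < 3*N) := by omega
      rw [if_neg h1, hjN, hsN]
      push_cast
      ring
  have hy3 : ∀ j, j ≤ N → y (3*j) = sfun j := by
    intro j hj
    simp only [hydef]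
    by_cases h : j < N
    · have h1 : 3*j < 3*N := by omega
      have h2 : (3*j) % 3 = 0 := by omega
      have h3 : (3*j)/3 = j := by omega
      rw [if_pos h1, if_pos h2, h3]
    · have hjN : j = N := by omega
      have h1 : ¬(3*j < 3*N) := by omega
      rw [if_neg h1, hjN, hsN]
      push_cast
      ring
  have hxp : ∀ j, j < N → x (3*j+1) = sfun j + γ := by
    intro j hj
    simp only [hxdef]
    have h1 : 3*j+1 < 3*N := by omega
    have h2 : (3*j+1) % 3 = 1 := by omega
    have h2' : (3*j+1) % 3 ≠ 0 := by omega
    have h3 : (3*j+1)/3 = j := by omega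
    rw [if_pos h1, if_neg h2', if_pos h2, h3]
  have hxq : ∀ j, j < N → x (3*j+2) = sfun (j+1) - γ := by
    intro j hj
    simp only [hxdef]
    have h1 : 3*j+2 < 3*N := by omega
    have h2' : (3*j+2) % 3 ≠ 0 := by omega
    have h2'' : (3*j+2) % 3 ≠ 1 := by omega
    have h3 : (3*j+2)/3 = j := by omega
    rw [if_pos h1, if_neg h2', if_neg h2'', h3]
  have hyp : ∀ j, j < N → y (3*j+1) = bfun j := by
    intro j hj
    simp only [hydef]
    have h1 : 3*j+1 < 3*N := by omega
    have h2 : (3*j+1) % 3 = 1 := by omega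
    have h2' : (3*j+1) % 3 ≠ 0 := by omega
    have h3 : (3*j+1)/3 = j := by omega
    rw [if_pos h1, if_neg h2', if_pos h2, h3]
  have hyq : ∀ j, j < N → y (3*j+2) = bfun j + η/2 := by
    intro j hj
    simp only [hydef]
    have h1 : 3*j+2 < 3*N := by omega
    have h2' : (3*j+2) % 3 ≠ 0 := by omega
    have h2'' : (3*j+2) % 3 ≠ 1 := by omega
    have h3 : (3*j+2)/3 = j := by omega
    rw [if_pos h1, if_neg h2', if_neg h2'', h3]
  have hx0 : x 0 = 0 := by
    have := hx3 0 (by omega)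
    simpa [hs0] using this
  have hxM : x (3*N) = 1 := by
    have := hx3 N le_rfl
    rwa [hsN] at this
  have hy0 : y 0 = 0 := by
    have := hy3 0 (by omega)
    simpa [hs0] using this
  have hyM : y (3*N) = 1 := by
    have := hy3 N le_rfl
    rwa [hsN] at this
  have hxlt : ∀ i, x i < x (i+1) := by
    intro i
    by_cases hi : i < 3*N
    · obtain ⟨q, hqN, hcase⟩ : ∃ q, q < N ∧ (i = 3*q ∨ i = 3*q+1 ∨ i = 3*q+2) :=
        ⟨i/3, by omega, by omega⟩
      rcases hcase with rfl | rfl | rfl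
      · rw [hx3 q (by omega), hxp q hqN]
        linarith
      · rw [hxp q hqN, show 3*q+1+1 = 3*q+2 by ring, hxq q hqN]
        linarith [hγgap q hqN]
      · rw [hxq q hqN, show 3*q+2+1 = 3*(q+1) by ring, hx3 (q+1) (by omega)]
        linarith
    · have hi1 : ¬(i + 1 < 3*N) := by omega
      simp only [hxdef]
      rw [if_neg hi, if_neg hi1]
      push_cast
      linarith
  have hylt : ∀ i, y i < y (i+1) := by
    intro i
    by_cases hi : i < 3*N
    · obtain ⟨q, hqN, hcase⟩ : ∃ q, q < N ∧ (i = 3*q ∨ i = 3*q+1 ∨ i = 3*q+2) :=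
        ⟨i/3, by omega, by omega⟩
      rcases hcase with rfl | rfl | rfl
      · rw [hy3 q (by omega), hyp q hqN]
        exact hblow q hqN
      · rw [hyp q hqN, show 3*q+1+1 = 3*q+2 by ring, hyq q hqN]
        linarith
      · rw [hyq q hqN, show 3*q+2+1 = 3*(q+1) by ring, hy3 (q+1) (by omega)]
        exact hbhigh q hqN
    · have hi1 : ¬(i + 1 < 3*N) := by omega
      simp only [hydef]
      rw [if_neg hi, if_neg hi1]
      push_cast
      linarith
  -- stage D : the homeomorphism and conclusion
  set hfn := pl x y (3*N) with hfndef
  have hmono : Monotone hfn := pl_mono hxlt (fun i => (hylt i).le)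
  have hsm : StrictMonoOn hfn (Set.Icc 0 1) := by
    have := pl_strictMonoOn hxlt hylt (M := 3*N)
    rwa [hx0, hxM] at this
  have hknot : ∀ j, j ≤ 3*N → hfn (x j) = y j := fun j hj => pl_knot y hxlt hj
  have hπ0 : π 0 = 0 := by simp [hπdef, piF]
  have hπN : π (N-1) = 1 := by
    have hne : N - 1 ≠ 0 := by omega
    simp only [hπdef, piF]
    rw [if_neg hne]
    simp
  have hπmid : ∀ j, j ≠ 0 → j ≠ N-1 → π j = picks sfun j := by
    intro j h0' hN'
    simp only [hπdef, piF]
    rw [if_neg h0', if_neg hN']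
  -- h maps [0,1] into itself, windows into windows
  have hfn0 : hfn 0 = 0 := by
    have := hknot 0 (by omega)
    rwa [hx0, hy0] at this
  have hfn1 : hfn 1 = 1 := by
    have := hknot (3*N) le_rfl
    rwa [hxM, hyM] at this
  have hwin : ∀ t, ∀ j, j < N → sfun j ≤ t → t ≤ sfun (j+1) →
      sfun j ≤ hfn t ∧ hfn t ≤ sfun (j+1) := by
    intro t j hj h1 h2
    constructor
    · have := hmono (le_of_eq_of_le (hx3 j (by omega : j ≤ N)) h1)
      rwa [hknot (3*j) (by omega), hy3 j (by omega)] at this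
    · have := hmono (le_of_le_of_eq h2 (hx3 (j+1) (by omega)).symm)
      have h3 : 3*(j+1) ≤ 3*N := by omega
      rwa [hknot (3*(j+1)) h3, hy3 (j+1) (by omega)] at this
  have hfind : ∀ t, 0 ≤ t → t ≤ 1 → ∃ j, j < N ∧ sfun j ≤ t ∧ t ≤ sfun (j+1) := by
    intro t h0 h1
    rcases eq_or_lt_of_le h1 with h1' | h1'
    · refine ⟨N-1, by omega, ?_, ?_⟩
      · have := hsmono.monotone (show N-1 ≤ N by omega)
        rw [hsN] at this
        rw [h1']
        exact this
      · have hEq : N - 1 + 1 = N := by omega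
        rw [hEq, hsN, h1']
    · have h0' : sfun 0 ≤ t := by rw [hs0]; exact h0
      have h1'' : t < sfun N := by rw [hsN]; exact h1'
      obtain ⟨j, hj, ha, hb⟩ := exists_seg sfun hslt h0' h1''
      exact ⟨j, hj, ha, hb.le⟩
  have hassign : ∀ t, t ∈ D → ∃ j, j < N ∧ |hfn t - π j| ≤ η := by
    intro t ht
    have ht01 := hDsub ht
    obtain ⟨j, hjN, hj1, hj2⟩ := hfind t ht01.1 ht01.2
    by_cases hj0 : j = 0
    · subst hj0
      refine ⟨0, by omega, ?_⟩
      rw [hπ0]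
      have hup : t ≤ sfun 1 - γ := by
        have hne := hγD t ht 1 le_rfl (by omega)
        rcases abs_cases (t - sfun 1) with ⟨he, _⟩ | ⟨he, _⟩ <;> rw [he] at hne <;> linarith
      have h2' : hfn t ≤ bfun 0 + η/2 := by
        have := hmono (le_of_le_of_eq hup (hxq 0 (by omega)).symm)
        rwa [hknot (3*0+2) (by omega), hyq 0 (by omega)] at this
      have h1' : 0 ≤ hfn t := by
        have := hmono (le_of_eq_of_le hx0 (le_of_eq_of_le hs0.symm hj1))
        rwa [hknot 0 (by omega), hy0] at this
      have hb0 : bfun 0 = η/4 := by simp [hbfun]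
      rw [hb0] at h2'
      rw [abs_le]
      constructor
      · linarith
      · linarith
    by_cases hjN' : j = N-1
    · refine ⟨N-1, by omega, ?_⟩
      rw [hπN]
      have hlow : sfun j + γ ≤ t := by
        have hne := hγD t ht j (by omega) hjN
        rcases abs_cases (t - sfun j) with ⟨he, _⟩ | ⟨he, _⟩ <;> rw [he] at hne <;> linarith
      have h1' : bfun j ≤ hfn t := by
        have := hmono (le_of_eq_of_le (hxp j hjN) hlow)
        rwa [hknot (3*j+1) (by omega), hyp j hjN] at this
      have h2' : hfn t ≤ 1 := by
        have := hmono (le_of_le_of_eq ht01.2 hxM.symm)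
        rwa [hknot (3*N) le_rfl, hyM] at this
      have hbN : bfun j = 1 - 3*η/4 := by
        simp only [hbfun]
        rw [if_neg hj0, if_pos hjN']
      rw [hbN] at h1'
      rw [abs_le]
      constructor
      · linarith
      · linarith
    · refine ⟨j, hjN, ?_⟩
      rw [hπmid j hj0 hjN']
      have hlow : sfun j + γ ≤ t := by
        have hne := hγD t ht j (by omega) hjN
        rcases abs_cases (t - sfun j) with ⟨he, _⟩ | ⟨he, _⟩ <;> rw [he] at hne <;> linarith
      have hup : t ≤ sfun (j+1) - γ := by
        have hj1N : j + 1 < N := by omega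
        have hne := hγD t ht (j+1) (by omega) hj1N
        rcases abs_cases (t - sfun (j+1)) with ⟨he, _⟩ | ⟨he, _⟩ <;> rw [he] at hne <;> linarith
      have h1' : bfun j ≤ hfn t := by
        have := hmono (le_of_eq_of_le (hxp j hjN) hlow)
        rwa [hknot (3*j+1) (by omega), hyp j hjN] at this
      have h2' : hfn t ≤ bfun j + η/2 := by
        have := hmono (le_of_le_of_eq hup (hxq j hjN).symm)
        rwa [hknot (3*j+2) (by omega), hyq j hjN] at this
      have hbm : bfun j = picks sfun j := by
        simp only [hbfun]
        rw [if_neg hj0, if_neg hjN']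
      rw [abs_le]
      rw [hbm] at h1' h2'
      constructor <;> linarith [hηpos]
  -- the perturbed map
  set ψc : C(II, ℝ) := ⟨fun c => hfn (φ.1 c), (pl_continuous x y (3*N)).comp φ.1.continuous⟩
    with hψcdef
  have hψH : ψc ∈ Hplus := by
    refine ⟨?_, ?_, ?_⟩
    · intro c c' hcc
      have := φmono hcc
      exact hsm (hφmem c) (hφmem c') this
    · show hfn (φ.1 ⟨0, by norm_num⟩) = 0
      rw [φ0, hfn0]
    · show hfn (φ.1 ⟨1, by norm_num⟩) = 1
      rw [φ1, hfn1]
  set ψ : ↥Hplus := ⟨ψc, hψH⟩ with hψdef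
  refine ⟨ψ, Set.mem_inter ?_ ?_⟩
  · -- distance
    rw [Metric.mem_ball, Subtype.dist_eq]
    have hbd : dist ψc φ.1 ≤ 2/N := by
      rw [ContinuousMap.dist_le (by positivity)]
      intro c
      have hc01 := hφmem c
      obtain ⟨j, hjN, h1, h2⟩ := hfind (φ.1 c) hc01.1 hc01.2
      obtain ⟨hw1, hw2⟩ := hwin (φ.1 c) j hjN h1 h2
      rw [Real.dist_eq, abs_le]
      simp only [hψcdef, ContinuousMap.coe_mk]
      constructor <;> linarith [hgap j hjN]
    exact lt_of_le_of_lt hbd hNδ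
  · -- membership in Heps
    rintro ⟨X, d, hdε, hm1, hm2, hm3⟩
    have hval : ∀ z, z ∈ imgC ψc C → ∃ j, j < N ∧ |z - π j| ≤ η := by
      rintro _ ⟨c, hc, rfl⟩
      exact hassign (φ.1 c) ⟨c, hc, rfl⟩
    obtain ⟨j1, hj1N, e1⟩ := hval X hm1
    obtain ⟨j2, hj2N, e2⟩ := hval (X + d) hm2
    obtain ⟨j3, hj3N, e3⟩ := hval (X + 2*d) hm3
    have hd : 0 < d := lt_of_lt_of_le hε hdε
    rw [abs_le] at e1 e2 e3
    by_cases h12 : j1 = j2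
    · rw [h12] at e1
      linarith [e1.1, e1.2, e2.1, e2.2]
    by_cases h23 : j2 = j3
    · rw [h23] at e2
      linarith [e2.1, e2.2, e3.1, e3.2]
    by_cases h13 : j1 = j3
    · rw [h13] at e1
      linarith [e1.1, e1.2, e3.1, e3.2]
    · have hB := hηB j1 j2 j3 hj1N hj2N hj3N h12 h23 h13
      have habs : |π j1 + π j3 - 2*π j2| ≤ 4*η := by
        rw [abs_le]
        constructor <;> linarith [e1.1, e1.2, e2.1, e2.2, e3.1, e3.2]
      linarith

/-- For compact nowhere dense `C ⊆ [0,1]`, the set `H_0(C) = ⋂_{k ≥ 1} H_{1/k}(C)` is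
residual in `H⁺`, and every `φ ∈ H_0(C)` maps `C` onto an AP-free set. -/
theorem H0_residual_and_FAP (C : Set ℝ) (hC : C ⊆ Set.Icc 0 1)
    (hcomp : IsCompact C) (hnd : IsNowhereDense C) :
    IsMeagre (⋂ (k : ℕ) (_ : 1 ≤ k), Heps C (1 / (k : ℝ)))ᶜ ∧
    ∀ φ ∈ ⋂ (k : ℕ) (_ : 1 ≤ k), Heps C (1 / (k : ℝ)), FAP (imgC φ.1 C) := by
  constructor
  · rw [Set.compl_iInter]
    apply isMeagre_iUnion
    intro k
    rw [Set.compl_iInter]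
    by_cases hk : 1 ≤ k
    · have hkpos : (0:ℝ) < 1/(k:ℝ) := by
        have : (1:ℝ) ≤ (k:ℝ) := by exact_mod_cast hk
        positivity
      have hop := Heps_isOpen hcomp.isClosed (1/(k:ℝ))
      have hden := Heps_dense hC hcomp hnd hkpos
      have hEq : (⋃ (_ : 1 ≤ k), (Heps C (1/(k:ℝ)))ᶜ) = (Heps C (1/(k:ℝ)))ᶜ := by
        simp [hk]
      rw [hEq]
      rw [isMeagre_iff_countable_union_isNowhereDense]
      refine ⟨{(Heps C (1/(k:ℝ)))ᶜ}, ?_, Set.countable_singleton _, ?_⟩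
      · rintro t ht
        rw [Set.mem_singleton_iff] at ht
        subst ht
        rw [(hop.isClosed_compl).isNowhereDense_iff, interior_compl, hden.closure_eq]
        simp
      · intro z hz
        exact ⟨_, Set.mem_singleton _, hz⟩
    · have hEq : (⋃ (_ : 1 ≤ k), (Heps C (1/(k:ℝ)))ᶜ) = (∅ : Set ↥Hplus) := by
        simp [hk]
      rw [hEq]
      exact IsMeagre.empty
  · rintro φ hφ ⟨X, d, hd, h1, h2, h3⟩
    simp only [Set.mem_iInter] at hφ
    obtain ⟨n, hn⟩ := exists_nat_one_div_lt hd
    exact hφ (n+1) (by omega) ⟨X, d, by exact_mod_cast hn.le, h1, h2, h3⟩
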